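/- Rule R7 is sound and locally complete: for a variable X, a letter a ∈ Σ, and words u, v over Σ ∪ Γ, the equation X·u = a·v is satisfiable if and only if either the equation (X·u)[X ↦ ε] = (a·v)[X ↦ ε] is satisfiable, or the equation (X'·u)[X ↦ a·X'] = v[X ↦ a·X'] is satisfiable, where X' is a fresh variable and [X ↦ w] denotes replacing every occurrence of X by the word w. -/

import Mathlib

/-- Extension of a substitution `h : Γ → Σ*` to a monoid homomorphism on words over `Σ ∪ Γ`
that fixes letters of the alphabet. -/
def applySub {A V : Type} (h : V → List A) (u : List (A ⊕ V)) : List A :=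
  u.flatMap (Sum.elim (fun a => [a]) h)

/-- Homomorphic replacement `u[X ↦ w]` of the variable `X` by the word `w` in `u`. -/
def repl {A V : Type} [DecidableEq V] (X : V) (w : List (A ⊕ V)) (u : List (A ⊕ V)) :
    List (A ⊕ V) :=
  u.flatMap (Sum.elim (fun a => [Sum.inl a]) (fun Y => if Y = X then w else [Sum.inr Y]))

lemma applySub_cons {A V : Type} (h : V → List A) (x : A ⊕ V) (u : List (A ⊕ V)) :
    applySub h (x :: u) = Sum.elim (fun a => [a]) h x ++ applySub h u := by
  simp [applySub]

lemma applySub_repl {A V : Type} [DecidableEq V] (h : V → List A) (X : V)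
    (w u : List (A ⊕ V)) :
    applySub h (repl X w u) =
      applySub (fun Y => if Y = X then applySub h w else h Y) u := by
  induction u with
  | nil => simp [applySub, repl]
  | cons x t ih =>
    cases x with
    | inl a => simpa [repl, applySub_cons] using ih
    | inr Y =>
      by_cases hY : Y = X <;>
        simp [repl, applySub_cons, hY, applySub, List.flatMap_append] at ih ⊢ <;> simp [ih]

lemma applySub_congr {A V : Type} (h g : V → List A) (u : List (A ⊕ V))
    (hcong : ∀ Y, Sum.inr Y ∈ u → h Y = g Y) : applySub h u = applySub g u := by
  induction u with
  | nil => rfl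
  | cons x t ih =>
    rw [applySub_cons, applySub_cons, ih (fun Y hy => hcong Y (by simp [hy]))]
    cases x with
    | inl a => rfl
    | inr Y => simp [hcong Y (by simp)]

/-- Rule R7 is sound and locally complete. -/
theorem stmt_4 {A V : Type} [DecidableEq V] (X X' : V) (a : A) (u v : List (A ⊕ V))
    (hXX' : X' ≠ X) (hX'u : Sum.inr X' ∉ u) (hX'v : Sum.inr X' ∉ v) :
    (∃ h : V → List A, applySub h (Sum.inr X :: u) = applySub h (Sum.inl a :: v)) ↔
      ((∃ h : V → List A,
          applySub h (repl X [] (Sum.inr X :: u)) = applySub h (repl X [] (Sum.inl a :: v))) ∨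
       (∃ h : V → List A,
          applySub h (repl X [Sum.inl a, Sum.inr X'] (Sum.inr X' :: u)) =
            applySub h (repl X [Sum.inl a, Sum.inr X'] v))) := by
  constructor
  · rintro ⟨h, hh⟩
    rw [applySub_cons, applySub_cons] at hh
    rcases hhX : h X with _ | ⟨b, t⟩
    · left
      refine ⟨h, ?_⟩
      rw [applySub_repl, applySub_repl]
      have : (fun Y => if Y = X then applySub h ([] : List (A ⊕ V)) else h Y) = h := by
        funext Y; by_cases hY : Y = X <;> simp [hY, applySub, hhX]
      rw [this]; simpa [applySub_cons] using hh
    · -- h X = b :: t, and hh forces b = a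
      simp [hhX] at hh
      obtain ⟨heq, hh⟩ := hh
      subst heq
      right
      refine ⟨fun Y => if Y = X' then t else h Y, ?_⟩
      rw [applySub_repl, applySub_repl]
      set g : V → List A := fun Y =>
        if Y = X then
          applySub (fun Z => if Z = X' then t else h Z) [Sum.inl b, Sum.inr X']
        else if Y = X' then t else h Y with hg
      have hgu : applySub g u = applySub h u := by
        apply applySub_congr
        intro Y hy
        have hYX' : Y ≠ X' := fun e => hX'u (e ▸ hy)
        by_cases hY : Y = X <;> simp [hg, hY, hYX', applySub, hhX]
      have hgv : applySub g v = applySub h v := by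
        apply applySub_congr
        intro Y hy
        have hYX' : Y ≠ X' := fun e => hX'v (e ▸ hy)
        by_cases hY : Y = X <;> simp [hg, hY, hYX', applySub, hhX]
      rw [applySub_cons, hgu, hgv]
      simp [hg, hXX', hh]
  · rintro (⟨h, hh⟩ | ⟨h, hh⟩)
    · rw [applySub_repl, applySub_repl] at hh
      exact ⟨_, hh⟩
    · rw [applySub_repl, applySub_repl] at hh
      set g : V → List A := fun Y =>
        if Y = X then applySub h [Sum.inl a, Sum.inr X'] else h Y with hg
      refine ⟨g, ?_⟩
      rw [applySub_cons, applySub_cons]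
      rw [applySub_cons] at hh
      simp only [hg, Sum.elim_inl, Sum.elim_inr, if_pos rfl, hXX', if_neg hXX'] at hh ⊢
      simp [applySub] at hh ⊢
      rw [hh]
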